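/- Let 2 ≤ d_1 ≤ ⋯ ≤ d_n with n ≥ 2, and let d be an integer with Σ_{i=1}^{n−1}(d_i − 1) ≤ d < Σ_{i=1}^n (d_i − 1). Write d = Σ_{i=1}^{n−1}(d_i − 1) + ℓ with 0 ≤ ℓ < d_n − 1. Then for each t ∈ {1, …, ℓ + 1}, the t-th Hamming weight of the affine cartesian code C(d) over X = A_1 × ⋯ × A_n (with #A_i = d_i) equals d_n − ℓ + (t − 1). -/

import Mathlib

open MvPolynomial

/-- The set of Hamming weights of nonzero codewords of `C(d)` over
`X = A_1 × ⋯ × A_n`. -/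
def codeWeights (F : Type*) [Field F] (n : ℕ) (A : Fin n → Finset F)
    (d : ℕ) : Set ℕ :=
  {w | ∃ f : MvPolynomial (Fin n) F, f.totalDegree ≤ d ∧
    w = Set.ncard {x : Fin n → F | (∀ i, x i ∈ A i) ∧ eval x f ≠ 0} ∧ w ≠ 0}

attribute [local instance] Classical.propDecidable

set_option maxHeartbeats 1600000
set_option linter.unusedSectionVars false
set_option linter.unusedVariables false

namespace CWAux

variable {F : Type*} [Field F]

/-- number of points of the grid where `f` is nonzero -/
noncomputable def W {n : ℕ} (A : Fin n → Finset F) (f : MvPolynomial (Fin n) F) : ℕ :=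
  ((Fintype.piFinset A).filter fun x => eval x f ≠ 0).card

lemma W_zero {n : ℕ} (A : Fin n → Finset F) : W A (0 : MvPolynomial (Fin n) F) = 0 := by
  simp [W]

lemma W_C_mul {n : ℕ} (A : Fin n → Finset F) {c : F} (hc : c ≠ 0)
    (f : MvPolynomial (Fin n) F) : W A (MvPolynomial.C c * f) = W A f := by
  unfold W
  congr 1
  apply Finset.filter_congr
  intro x _
  simp [hc]

lemma eval_cons {n : ℕ} (f : MvPolynomial (Fin (n+1)) F) (a : F) (y : Fin n → F) :
    eval (Fin.cons a y) f
      = eval y (Polynomial.eval (MvPolynomial.C a) (finSuccEquiv F n f)) := by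
  rw [eval_eq_eval_mv_eval', Polynomial.eval_map]
  set q := finSuccEquiv F n f
  have h1 : eval y (Polynomial.eval (MvPolynomial.C a) q)
      = Polynomial.eval₂ ((eval y : MvPolynomial (Fin n) F →+* F).comp (RingHom.id _))
        ((eval y : MvPolynomial (Fin n) F →+* F) (MvPolynomial.C a)) q := by
    rw [← Polynomial.hom_eval₂]
    rfl
  rw [h1]
  simp [Polynomial.eval₂]

lemma sum_piFinset_succ {n : ℕ} {M : Type*} [AddCommMonoid M]
    (A : Fin (n+1) → Finset F) (g : (Fin (n+1) → F) → M) :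
    ∑ x ∈ Fintype.piFinset A, g x
      = ∑ a ∈ A 0, ∑ y ∈ Fintype.piFinset (fun i => A i.succ), g (Fin.cons a y) := by
  rw [← Finset.sum_product']
  refine Finset.sum_nbij' (fun x => (x 0, fun i => x i.succ))
    (fun p => Fin.cons p.1 p.2) ?_ ?_ ?_ ?_ ?_
  · intro x hx
    rw [Fintype.mem_piFinset] at hx
    rw [Finset.mem_product]
    exact ⟨hx 0, Fintype.mem_piFinset.2 fun i => hx i.succ⟩
  · intro p hp
    rw [Finset.mem_product] at hp
    rw [Fintype.mem_piFinset]
    intro i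
    refine Fin.cases ?_ ?_ i
    · simpa using hp.1
    · intro j
      simpa using Fintype.mem_piFinset.1 hp.2 j
  · intro x _
    exact Fin.cons_self_tail x
  · intro p _
    simp
  · intro x _
    exact (congrArg g (Fin.cons_self_tail x)).symm

lemma W_succ {n : ℕ} (A : Fin (n+1) → Finset F) (f : MvPolynomial (Fin (n+1)) F) :
    W A f = ∑ a ∈ A 0,
      W (fun i => A i.succ) (Polynomial.eval (MvPolynomial.C a) (finSuccEquiv F n f)) := by
  unfold W
  rw [Finset.card_filter, sum_piFinset_succ]
  refine Finset.sum_congr rfl fun a _ => ?_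
  rw [Finset.card_filter]
  refine Finset.sum_congr rfl fun y _ => ?_
  rw [eval_cons]


lemma coeff_div_linear {n : ℕ} {q r : Polynomial (MvPolynomial (Fin n) F)} {a : F}
    (h : q = (Polynomial.X - Polynomial.C (MvPolynomial.C a)) * r) (j : ℕ) :
    r.coeff j = q.coeff (j+1) + MvPolynomial.C a * r.coeff (j+1) := by
  have h2 : q.coeff (j+1) = r.coeff j - MvPolynomial.C a * r.coeff (j+1) := by
    rw [h, sub_mul, Polynomial.coeff_sub, Polynomial.coeff_X_mul, Polynomial.coeff_C_mul]
  rw [h2]; ring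

lemma div_linear_bound {n : ℕ} {q r : Polynomial (MvPolynomial (Fin n) F)} {a : F}
    (h : q = (Polynomial.X - Polynomial.C (MvPolynomial.C a)) * r)
    (μ : MvPolynomial (Fin n) F → ℕ)
    (hadd : ∀ p p', μ (p + p') ≤ max (μ p) (μ p'))
    (hCmul : ∀ p, μ (MvPolynomial.C a * p) ≤ μ p)
    (c : ℕ → ℕ) (hc : ∀ j, c (j+1) ≤ c j)
    (hq : ∀ j, μ (q.coeff (j+1)) ≤ c j) : ∀ j, μ (r.coeff j) ≤ c j := by
  suffices H : ∀ m j, r.natDegree ≤ j + m → μ (r.coeff j) ≤ c j by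
    intro j; exact H r.natDegree j (by omega)
  intro m
  induction m with
  | zero =>
    intro j hj
    have h1 : r.coeff (j+1) = 0 := Polynomial.coeff_eq_zero_of_natDegree_lt (by omega)
    rw [coeff_div_linear h, h1, mul_zero, add_zero]
    exact hq j
  | succ m ih =>
    intro j hj
    rw [coeff_div_linear h]
    refine le_trans (hadd _ _) (max_le (hq j) ?_)
    exact le_trans (le_trans (hCmul _) (ih (j+1) (by omega))) (hc j)

lemma totalDegree_le_of_coeff {n : ℕ} (g : MvPolynomial (Fin (n+1)) F) (D : ℕ)
    (h : ∀ i, (finSuccEquiv F n g).coeff i = 0 ∨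
      totalDegree ((finSuccEquiv F n g).coeff i) + i ≤ D) :
    totalDegree g ≤ D := by
  rw [totalDegree]
  apply Finset.sup_le
  intro m hm
  have hmem : Finsupp.tail m ∈ ((finSuccEquiv F n g).coeff (m 0)).support := by
    rw [mem_support_coeff_finSuccEquiv, Finsupp.cons_tail]
    exact hm
  rcases h (m 0) with h0 | h0
  · rw [h0] at hmem; simp at hmem
  · calc m.sum (fun _ e => e) = ((Finsupp.tail m).cons (m 0)).sum (fun _ e => e) := by
          rw [Finsupp.cons_tail]
      _ = m 0 + (Finsupp.tail m).sum (fun _ e => e) := by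
          rw [Finsupp.sum_cons]
      _ ≤ m 0 + totalDegree ((finSuccEquiv F n g).coeff (m 0)) := by
          gcongr; exact le_totalDegree hmem
      _ ≤ D := by omega

lemma degreeOf_succ_le_of_coeff {n : ℕ} (g : MvPolynomial (Fin (n+1)) F) (j : Fin n) (c : ℕ)
    (h : ∀ i, degreeOf j ((finSuccEquiv F n g).coeff i) ≤ c) :
    degreeOf j.succ g ≤ c := by
  rw [degreeOf_eq_sup]
  apply Finset.sup_le
  intro m hm
  have hmem : Finsupp.tail m ∈ ((finSuccEquiv F n g).coeff (m 0)).support := by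
    rw [mem_support_coeff_finSuccEquiv, Finsupp.cons_tail]
    exact hm
  have h1 : m j.succ = Finsupp.tail m j := (Finsupp.tail_apply _ _).symm
  rw [h1]
  refine le_trans ?_ (h (m 0))
  rw [degreeOf_eq_sup]
  exact Finset.le_sup (f := fun m => m j) hmem

lemma totalDegree_le_sum_degreeOf {n : ℕ} (f : MvPolynomial (Fin n) F) :
    totalDegree f ≤ ∑ i, degreeOf i f := by
  rw [totalDegree]
  apply Finset.sup_le
  intro m hm
  rw [Finsupp.sum_fintype _ _ (fun _ => rfl)]
  apply Finset.sum_le_sum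
  intro i _
  rw [degreeOf_eq_sup]
  exact Finset.le_sup (f := fun m => m i) hm

lemma eval_C_totalDegree {n : ℕ} (q : Polynomial (MvPolynomial (Fin n) F)) (b : F) (D : ℕ)
    (h : ∀ i, totalDegree (q.coeff i) ≤ D) :
    totalDegree (q.eval (MvPolynomial.C b)) ≤ D := by
  rw [Polynomial.eval_eq_sum_range]
  apply totalDegree_finsetSum_le
  intro i _
  refine le_trans (totalDegree_mul _ _) ?_
  have h2 : ((MvPolynomial.C b : MvPolynomial (Fin n) F) ^ i).totalDegree = 0 := by
    rw [← map_pow, totalDegree_C]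
  rw [h2, add_zero]
  exact h i

lemma eval_C_degreeOf {n : ℕ} (q : Polynomial (MvPolynomial (Fin n) F)) (b : F) (j : Fin n)
    (c : ℕ) (h : ∀ i, degreeOf j (q.coeff i) ≤ c) :
    degreeOf j (q.eval (MvPolynomial.C b)) ≤ c := by
  rw [Polynomial.eval_eq_sum_range]
  refine le_trans (degreeOf_sum_le _ _ _) ?_
  apply Finset.sup_le
  intro i _
  refine le_trans (degreeOf_mul_le _ _ _) ?_
  have h2 : degreeOf j ((MvPolynomial.C b : MvPolynomial (Fin n) F) ^ i) = 0 := by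
    rw [← map_pow, degreeOf_C]
  have := h i
  omega


lemma degreeOf_sub_le' {n : ℕ} (j : Fin n) (p p' : MvPolynomial (Fin n) F) :
    degreeOf j (p - p') ≤ max (degreeOf j p) (degreeOf j p') := by
  have h : p - p' = p + MvPolynomial.C (-1) * p' := by
    rw [map_neg, map_one]; ring
  rw [h]
  refine le_trans (degreeOf_add_le _ _ _) ?_
  exact max_le_max le_rfl (degreeOf_C_mul_le _ _ _)

lemma finSuccEquiv_C' {n : ℕ} (a : F) :
    finSuccEquiv F n (MvPolynomial.C a) = Polynomial.C (MvPolynomial.C a) := by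
  rw [finSuccEquiv_apply]
  simp

/-- One-variable reduction: reduce the degree in variable `0` below `#A0` without
increasing the total degree nor the degrees in the other variables, keeping the values
at points whose first coordinate lies in `A0`. -/
lemma reduce0 (k : ℕ) : ∀ {n : ℕ} (A0 : Finset F), A0.Nonempty →
    ∀ (f : MvPolynomial (Fin (n+1)) F), degreeOf 0 f ≤ k →
    ∃ g : MvPolynomial (Fin (n+1)) F, degreeOf 0 g < A0.card ∧
      totalDegree g ≤ totalDegree f ∧
      (∀ j : Fin n, degreeOf j.succ g ≤ degreeOf j.succ f) ∧
      ∀ x : Fin (n+1) → F, x 0 ∈ A0 → eval x g = eval x f := by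
  induction k using Nat.strong_induction_on with
  | _ k IH =>
  intro n A0 hA0 f hk
  by_cases hlt : degreeOf 0 f < A0.card
  · exact ⟨f, hlt, le_rfl, fun _ => le_rfl, fun _ _ => rfl⟩
  push_neg at hlt
  have hcard : 1 ≤ A0.card := Finset.card_pos.2 hA0
  set q := finSuccEquiv F n f with hq
  have hnd : q.natDegree = degreeOf 0 f := by rw [hq, natDegree_finSuccEquiv]
  have hq0 : q ≠ 0 := by
    intro h
    rw [h, Polynomial.natDegree_zero] at hnd
    omega
  set c := q.leadingCoeff with hc
  have hc0 : c ≠ 0 := Polynomial.leadingCoeff_ne_zero.2 hq0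
  set m' := q.natDegree - A0.card with hm'
  set P0 : Polynomial F := ∏ a ∈ A0, (Polynomial.X - Polynomial.C a) with hP0
  have hP0monic : P0.Monic := Polynomial.monic_prod_of_monic _ _ fun a _ =>
    Polynomial.monic_X_sub_C a
  have hP0deg : P0.natDegree = A0.card := by
    rw [hP0, Polynomial.natDegree_prod_of_monic _ _ (fun a _ => Polynomial.monic_X_sub_C a)]
    simp
  set P : Polynomial (MvPolynomial (Fin n) F) :=
    P0.map (MvPolynomial.C : F →+* MvPolynomial (Fin n) F) with hP
  have hPmonic : P.Monic := hP0monic.map _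
  have hPdeg : P.natDegree = A0.card := by
    rw [hP, Polynomial.natDegree_map_eq_of_injective (MvPolynomial.C_injective _ _), hP0deg]
  set E : Polynomial (MvPolynomial (Fin n) F) :=
    Polynomial.C c * (Polynomial.X ^ m' * P) with hE
  have hXP : (Polynomial.X ^ m' * P : Polynomial (MvPolynomial (Fin n) F)).Monic :=
    (Polynomial.monic_X_pow m').mul hPmonic
  have hXPdeg : (Polynomial.X ^ m' * P).natDegree = q.natDegree := by
    rw [Polynomial.natDegree_mul ((Polynomial.monic_X_pow m').ne_zero) hPmonic.ne_zero,
      Polynomial.natDegree_X_pow, hPdeg]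
    omega
  have hEdeg : E.natDegree = q.natDegree := by
    rw [hE, Polynomial.natDegree_C_mul hc0, hXPdeg]
  have hEcoeff : ∀ i, E.coeff i
      = c * (if m' ≤ i then MvPolynomial.C (P0.coeff (i - m')) else 0) := by
    intro i
    rw [hE, Polynomial.coeff_C_mul, mul_comm (Polynomial.X ^ m') P,
      Polynomial.coeff_mul_X_pow']
    congr 1
    split
    · rw [hP, Polynomial.coeff_map]
    · rfl
  have hEtop : E.coeff q.natDegree = c := by
    rw [hEcoeff]
    have h1 : m' ≤ q.natDegree := by omega
    rw [if_pos h1]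
    have h2 : q.natDegree - m' = P0.natDegree := by omega
    rw [h2, Polynomial.coeff_natDegree, hP0monic.leadingCoeff, map_one, mul_one]
  -- the new polynomial
  set g : MvPolynomial (Fin (n+1)) F := f - (finSuccEquiv F n).symm E with hg
  have hgq : finSuccEquiv F n g = q - E := by
    rw [hg, map_sub, (finSuccEquiv F n).apply_symm_apply, ← hq]
  have hqEdeg : (q - E).natDegree < q.natDegree := by
    by_cases h0 : q - E = 0
    · rw [h0, Polynomial.natDegree_zero]; omega
    · rw [Polynomial.natDegree_lt_iff_degree_lt h0]
      rw [Polynomial.degree_lt_iff_coeff_zero]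
      intro t ht
      have ht' : q.natDegree ≤ t := by exact_mod_cast ht
      rw [Polynomial.coeff_sub]
      rcases Nat.eq_or_lt_of_le ht' with h | h
      · rw [← h, hEtop, Polynomial.coeff_natDegree, ← hc, sub_self]
      · rw [Polynomial.coeff_eq_zero_of_natDegree_lt h,
          Polynomial.coeff_eq_zero_of_natDegree_lt (by omega), sub_self]
  have hdeg0g : degreeOf 0 g < q.natDegree := by
    rw [← natDegree_finSuccEquiv, hgq]
    exact hqEdeg
  -- total degree bound
  have hcdeg : totalDegree c + q.natDegree ≤ totalDegree f := by
    have h3 := totalDegree_coeff_finSuccEquiv_add_le f q.natDegree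
      (by rw [← hq, Polynomial.coeff_natDegree]; exact hc0)
    rw [← hq, Polynomial.coeff_natDegree, ← hc] at h3
    exact h3
  have hEcoeffdeg : ∀ i, totalDegree (E.coeff i) ≤ totalDegree c := by
    intro i
    rw [hEcoeff]
    split
    · refine le_trans (totalDegree_mul _ _) ?_
      rw [totalDegree_C]
      omega
    · rw [mul_zero, totalDegree_zero]
      exact Nat.zero_le _
  have hgdeg : totalDegree g ≤ totalDegree f := by
    apply totalDegree_le_of_coeff
    intro i
    rw [hgq]
    by_cases hi : i ≤ q.natDegree
    · right
      rw [Polynomial.coeff_sub]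
      have h1 : totalDegree (q.coeff i) + i ≤ totalDegree f := by
        by_cases h : q.coeff i = 0
        · rw [h, totalDegree_zero]
          have : i ≤ totalDegree f := by
            have := degreeOf_le_totalDegree f 0
            omega
          omega
        · have h2 := totalDegree_coeff_finSuccEquiv_add_le f i (by rwa [← hq])
          rw [← hq] at h2
          exact h2
      have h2 : totalDegree (E.coeff i) + i ≤ totalDegree f := by
        have := hEcoeffdeg i
        omega
      calc totalDegree (q.coeff i - E.coeff i) + i
          ≤ max (totalDegree (q.coeff i)) (totalDegree (E.coeff i)) + i := by
            gcongr
            exact totalDegree_sub _ _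
        _ ≤ totalDegree f := by omega
    · left
      rw [Polynomial.coeff_sub,
        Polynomial.coeff_eq_zero_of_natDegree_lt (by omega),
        Polynomial.coeff_eq_zero_of_natDegree_lt (by omega), sub_self]
  -- degreeOf in other variables
  have hgdegOf : ∀ j : Fin n, degreeOf j.succ g ≤ degreeOf j.succ f := by
    intro j
    apply degreeOf_succ_le_of_coeff
    intro i
    rw [hgq, Polynomial.coeff_sub]
    refine le_trans (degreeOf_sub_le' _ _ _) (max_le ?_ ?_)
    · have := degreeOf_coeff_finSuccEquiv f j i
      rw [← hq] at this
      exact this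
    · rw [hEcoeff]
      split
      · refine le_trans (degreeOf_mul_le _ _ _) ?_
        have h4 := degreeOf_coeff_finSuccEquiv f j q.natDegree
        rw [← hq, Polynomial.coeff_natDegree, ← hc] at h4
        rw [degreeOf_C, add_zero]
        exact h4
      · rw [mul_zero, degreeOf_zero]
        exact Nat.zero_le _
  -- values on the grid
  have hgeval : ∀ x : Fin (n+1) → F, x 0 ∈ A0 → eval x g = eval x f := by
    intro x hx
    rw [hg, map_sub]
    have hEx : eval x ((finSuccEquiv F n).symm E) = 0 := by
      rw [← Fin.cons_self_tail x, eval_cons, (finSuccEquiv F n).apply_symm_apply]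
      have hP0x : P0.eval (x 0) = 0 := by
        rw [hP0, Polynomial.eval_prod]
        refine Finset.prod_eq_zero hx ?_
        simp
      have hPx : P.eval (MvPolynomial.C (x 0)) = 0 := by
        rw [hP, Polynomial.eval_map, Polynomial.eval₂_at_apply, hP0x, map_zero]
      rw [hE, Polynomial.eval_mul, Polynomial.eval_mul, hPx, mul_zero, mul_zero, map_zero]
    rw [hEx, sub_zero]
  -- recurse
  have hklt : degreeOf 0 g < k := by omega
  obtain ⟨g', hg'1, hg'2, hg'3, hg'4⟩ := IH (degreeOf 0 g) hklt A0 hA0 g le_rfl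
  exact ⟨g', hg'1, le_trans hg'2 hgdeg, fun j => le_trans (hg'3 j) (hgdegOf j),
    fun x hx => by rw [hg'4 x hx, hgeval x hx]⟩

lemma finSuccEquiv_rename_succ {n : ℕ} (p : MvPolynomial (Fin n) F) :
    finSuccEquiv F n (rename Fin.succ p) = Polynomial.C p := by
  induction p using MvPolynomial.induction_on with
  | C a => rw [rename_C, finSuccEquiv_C']
  | add p q hp hq => rw [map_add, map_add, hp, hq, map_add]
  | mul_X p i hp => rw [map_mul, rename_X, map_mul, hp, finSuccEquiv_X_succ, ← map_mul]

/-- Full reduction: replace `f` by a polynomial reduced in every variable without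
increasing the total degree, keeping the same values on the grid. -/
lemma reduceAll : ∀ (n : ℕ) (A : Fin n → Finset F), (∀ i, (A i).Nonempty) →
    ∀ f : MvPolynomial (Fin n) F, ∃ g : MvPolynomial (Fin n) F,
      (∀ i, degreeOf i g < (A i).card) ∧ totalDegree g ≤ totalDegree f ∧
      ∀ x : Fin n → F, (∀ i, x i ∈ A i) → eval x g = eval x f := by
  intro n
  induction n with
  | zero =>
    intro A _ f
    exact ⟨f, fun i => i.elim0, le_rfl, fun _ _ => rfl⟩
  | succ n ihn =>
    intro A hA f
    obtain ⟨g0, hg01, hg02, hg03, hg04⟩ := reduce0 (degreeOf 0 f) (A 0) (hA 0) f le_rfl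
    set q := finSuccEquiv F n g0 with hq
    set k := q.natDegree with hk
    have hkcard : k < (A 0).card := by
      rw [hk, hq, natDegree_finSuccEquiv]
      exact hg01
    obtain ⟨R, hR⟩ := Classical.axiomOfChoice
      (ihn (fun i => A i.succ) (fun i => hA i.succ))
    have hR1 := fun p => (hR p).1
    have hR2 := fun p => (hR p).2.1
    have hR3 := fun p => (hR p).2.2
    set h : ℕ → MvPolynomial (Fin n) F :=
      fun i => if q.coeff i = 0 then 0 else R (q.coeff i) with hh
    have hhdeg : ∀ i, totalDegree (h i) ≤ totalDegree (q.coeff i) := by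
      intro i
      by_cases h0 : q.coeff i = 0
      · simp only [hh, if_pos h0, totalDegree_zero]; exact Nat.zero_le _
      · simp only [hh, if_neg h0]; exact hR2 _
    have hhred : ∀ i (j : Fin n), degreeOf j (h i) ≤ (A j.succ).card - 1 := by
      intro i j
      have hc1 : 1 ≤ (A j.succ).card := Finset.card_pos.2 (hA j.succ)
      by_cases h0 : q.coeff i = 0
      · simp only [hh, if_pos h0, degreeOf_zero]; omega
      · simp only [hh, if_neg h0]
        have h5 : degreeOf j (R (q.coeff i)) < (A j.succ).card := hR1 (q.coeff i) j
        omega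
    set g : MvPolynomial (Fin (n+1)) F :=
      ∑ i ∈ Finset.range (k+1), rename Fin.succ (h i) * X 0 ^ i with hg
    have hgq : finSuccEquiv F n g
        = ∑ i ∈ Finset.range (k+1), Polynomial.C (h i) * Polynomial.X ^ i := by
      rw [hg, map_sum]
      refine Finset.sum_congr rfl fun i _ => ?_
      rw [map_mul, map_pow, finSuccEquiv_X_zero, finSuccEquiv_rename_succ]
    have hgcoeff : ∀ i, (finSuccEquiv F n g).coeff i
        = if i ∈ Finset.range (k+1) then h i else 0 := by
      intro i
      rw [hgq]
      simp_rw [Polynomial.C_mul_X_pow_eq_monomial]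
      rw [Polynomial.finset_sum_coeff]
      simp_rw [Polynomial.coeff_monomial]
      exact Finset.sum_ite_eq' (Finset.range (k+1)) i h
    refine ⟨g, ?_, ?_, ?_⟩
    · -- reducedness
      intro i
      refine Fin.cases ?_ ?_ i
      · have : degreeOf 0 g ≤ k := by
          rw [← natDegree_finSuccEquiv]
          rw [Polynomial.natDegree_le_iff_coeff_eq_zero]
          intro N hN
          rw [hgcoeff, if_neg (by simp; omega)]
        omega
      · intro j
        have hc1 : 1 ≤ (A j.succ).card := Finset.card_pos.2 (hA j.succ)
        have : degreeOf j.succ g ≤ (A j.succ).card - 1 := by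
          apply degreeOf_succ_le_of_coeff
          intro i'
          rw [hgcoeff]
          split
          · exact hhred i' j
          · rw [degreeOf_zero]; omega
        omega
    · -- total degree
      refine le_trans ?_ hg02
      apply totalDegree_le_of_coeff
      intro i
      rw [hgcoeff]
      by_cases hi : i ∈ Finset.range (k+1)
      · rw [if_pos hi]
        by_cases h0 : q.coeff i = 0
        · left; rw [hh]; simp [h0]
        · right
          have h1 := totalDegree_coeff_finSuccEquiv_add_le g0 i (by rwa [← hq])
          rw [← hq] at h1
          have := hhdeg i
          omega
      · left; rw [if_neg hi]
    · -- evaluations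
      intro x hx
      have hxsucc : ∀ i : Fin n, (x ∘ Fin.succ) i ∈ A i.succ := fun i => hx i.succ
      have h1 : eval x g
          = ∑ i ∈ Finset.range (k+1), eval (x ∘ Fin.succ) (h i) * (x 0) ^ i := by
        rw [hg, map_sum]
        refine Finset.sum_congr rfl fun i _ => ?_
        rw [map_mul, map_pow, eval_X, eval_rename]
      have h2 : eval x g0
          = ∑ i ∈ Finset.range (k+1), eval (x ∘ Fin.succ) (q.coeff i) * (x 0) ^ i := by
        conv_lhs => rw [← Fin.cons_self_tail x, eval_cons, ← hq]
        rw [Polynomial.eval_eq_sum_range, map_sum]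
        refine Finset.sum_congr rfl fun i _ => ?_
        rw [map_mul, map_pow, eval_C]
        rfl
      rw [h1, ← hg04 x (hx 0), h2]
      refine Finset.sum_congr rfl fun i _ => ?_
      congr 1
      by_cases h0 : q.coeff i = 0
      · simp only [hh, if_pos h0, h0, map_zero]
      · simp only [hh, if_neg h0]
        exact hR3 _ (x ∘ Fin.succ) hxsucc

/-- Weak Alon–Füredi: a nonzero reduced polynomial has many nonzeros on the grid. -/
lemma key (N : ℕ) : ∀ (n : ℕ) (A : Fin n → Finset F) (f : MvPolynomial (Fin n) F),
    n + totalDegree f ≤ N → (∀ i, (A i).Nonempty) → f ≠ 0 →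
    (∀ i, degreeOf i f < (A i).card) →
    1 + ∑ i, ((A i).card - 1) ≤ W A f + totalDegree f := by
  induction N using Nat.strong_induction_on with
  | _ N IH =>
  intro n A f hN hne hf0 hred
  cases n with
  | zero =>
    -- f is a nonzero constant
    obtain ⟨c, rfl⟩ := MvPolynomial.C_surjective (Fin 0) f
    have hc : c ≠ 0 := fun h => hf0 (by rw [h, map_zero])
    have hW : W A (MvPolynomial.C c) = 1 := by
      unfold W
      rw [Finset.filter_true_of_mem (fun x _ => by simp [hc])]
      simp
    simp [hW]
  | succ n =>
    set q := finSuccEquiv F n f with hq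
    have hq0 : q ≠ 0 := by
      simp only [hq, ne_eq, EmbeddingLike.map_eq_zero_iff]
      exact hf0
    set D := totalDegree f with hD
    set At : Fin n → Finset F := fun i => A i.succ with hAt
    set m := ∑ i : Fin n, ((At i).card - 1) with hm
    have hsum : ∑ i : Fin (n+1), ((A i).card - 1) = ((A 0).card - 1) + m := by
      rw [Fin.sum_univ_succ]
    have hd0 : 1 ≤ (A 0).card := Finset.card_pos.2 (hne 0)
    -- coefficient bounds
    have hcoeffdeg : ∀ i, totalDegree (q.coeff i) ≤ D := by
      intro i
      by_cases h : q.coeff i = 0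
      · rw [h, totalDegree_zero]; exact Nat.zero_le _
      · have h2 := totalDegree_coeff_finSuccEquiv_add_le f i (by rwa [← hq])
        rw [← hq] at h2
        omega
    have hcoeffdegOf : ∀ (j : Fin n) i, degreeOf j (q.coeff i) ≤ (At j).card - 1 := by
      intro j i
      refine le_trans (degreeOf_coeff_finSuccEquiv f j i) ?_
      have := hred j.succ
      simp only [hAt]
      omega
    by_cases hroot : ∃ a ∈ A 0, Polynomial.eval (MvPolynomial.C a) q = 0
    · -- factor out a root
      obtain ⟨a, ha, hroota⟩ := hroot
      have hdvd : Polynomial.X - Polynomial.C (MvPolynomial.C a) ∣ q :=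
        Polynomial.dvd_iff_isRoot.2 hroota
      obtain ⟨r, hqr⟩ := hdvd
      have hr0 : r ≠ 0 := by rintro rfl; rw [mul_zero] at hqr; exact hq0 hqr
      have hXC : (Polynomial.X - Polynomial.C (MvPolynomial.C a) :
          Polynomial (MvPolynomial (Fin n) F)) ≠ 0 := Polynomial.X_sub_C_ne_zero _
      have hndeg : q.natDegree = r.natDegree + 1 := by
        rw [hqr, Polynomial.natDegree_mul hXC hr0, Polynomial.natDegree_X_sub_C]
        omega
      have hk : degreeOf 0 f = q.natDegree := (natDegree_finSuccEquiv f).symm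
      have hk1 : 1 ≤ q.natDegree := by omega
      have hkD : q.natDegree ≤ D := by
        rw [← hk]; exact degreeOf_le_totalDegree f 0
      have hD1 : 1 ≤ D := le_trans hk1 hkD
      have hd2 : 2 ≤ (A 0).card := by
        have := hred 0; omega
      set f' : MvPolynomial (Fin (n+1)) F := (finSuccEquiv F n).symm r with hf'
      have hf'q : finSuccEquiv F n f' = r := (finSuccEquiv F n).apply_symm_apply r
      have hf'0 : f' ≠ 0 := by
        simp only [hf', ne_eq, EmbeddingLike.map_eq_zero_iff]
        exact hr0
      set Abar : Fin (n+1) → Finset F := Fin.cons ((A 0).erase a) At with hAbar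
      have hAbar0 : Abar 0 = (A 0).erase a := rfl
      have hAbarsucc : ∀ i : Fin n, Abar i.succ = At i := fun i => by
        simp [hAbar]
      -- degree bounds for f'
      have hdegOf0 : degreeOf 0 f' = r.natDegree := by
        rw [← natDegree_finSuccEquiv, hf'q]
      have hrcoeff_td : ∀ j, totalDegree (r.coeff j) ≤ D - 1 - j := by
        apply div_linear_bound hqr totalDegree totalDegree_add
          (fun p => le_trans (totalDegree_mul _ _) (by rw [totalDegree_C]; omega))
          (fun j => D - 1 - j) (fun j => by show D - 1 - (j+1) ≤ D - 1 - j; omega)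
        intro j
        have := hcoeffdeg (j+1)
        by_cases h : q.coeff (j+1) = 0
        · rw [h, totalDegree_zero]; exact Nat.zero_le _
        · have h2 := totalDegree_coeff_finSuccEquiv_add_le f (j+1) (by rwa [← hq])
          rw [← hq] at h2
          show totalDegree (q.coeff (j+1)) ≤ D - 1 - j
          omega
      have hdegf' : totalDegree f' ≤ D - 1 := by
        apply totalDegree_le_of_coeff
        intro i
        rw [hf'q]
        by_cases hi : i ≤ D - 1
        · right
          have := hrcoeff_td i
          omega
        · left
          apply Polynomial.coeff_eq_zero_of_natDegree_lt
          omega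
      -- reduced degree bounds
      have hredf' : ∀ i, degreeOf i f' < (Abar i).card := by
        intro i
        refine Fin.cases ?_ ?_ i
        · rw [hdegOf0, hAbar0, Finset.card_erase_of_mem ha]
          have := hred 0
          rw [hk] at this
          omega
        · intro j
          rw [hAbarsucc]
          have hb : degreeOf j.succ f' ≤ (At j).card - 1 := by
            apply degreeOf_succ_le_of_coeff
            rw [hf'q]
            apply div_linear_bound hqr (degreeOf j) (degreeOf_add_le j)
              (fun p => degreeOf_C_mul_le p j a) (fun _ => (At j).card - 1) (fun _ => le_rfl)
            intro i
            exact hcoeffdegOf j (i+1)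
          have hbpos : 1 ≤ (At j).card := Finset.card_pos.2 (hne j.succ)
          omega
      -- nonemptiness for Abar
      have hneAbar : ∀ i, (Abar i).Nonempty := by
        intro i
        refine Fin.cases ?_ (fun j => by rw [hAbarsucc]; exact hne j.succ) i
        · rw [hAbar0]
          apply Finset.card_pos.1
          rw [Finset.card_erase_of_mem ha]
          omega
      -- counting: W A f = W Abar f'
      have hWeq : W A f = W Abar f' := by
        rw [W_succ, W_succ]
        have htail : (fun i : Fin n => Abar i.succ) = At := funext hAbarsucc
        rw [hf'q, hAbar0, htail, ← hq]
        rw [← Finset.sum_erase_add _ _ ha, hroota, W_zero, add_zero]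
        refine (Finset.sum_congr rfl fun b hb => ?_).symm
        have hba : b ≠ a := Finset.ne_of_mem_erase hb
        have : Polynomial.eval (MvPolynomial.C b) q
            = MvPolynomial.C (b - a) * Polynomial.eval (MvPolynomial.C b) r := by
          rw [hqr, Polynomial.eval_mul, Polynomial.eval_sub, Polynomial.eval_X,
            Polynomial.eval_C, ← map_sub]
        rw [this, W_C_mul _ (sub_ne_zero.2 hba)]
      -- apply IH
      have hsumAbar : ∑ i : Fin (n+1), ((Abar i).card - 1) = ((A 0).card - 2) + m := by
        rw [Fin.sum_univ_succ]
        have h1 : (Abar 0).card = (A 0).card - 1 := by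
          rw [hAbar0, Finset.card_erase_of_mem ha]
        have h2 : ∑ i : Fin n, ((Abar i.succ).card - 1) = m := by
          rw [hm]
          exact Finset.sum_congr rfl fun i _ => by rw [hAbarsucc]
        rw [h1, h2]
        omega
      have hIH := IH (n + 1 + totalDegree f') (by omega) (n+1) Abar f'
        le_rfl hneAbar hf'0 hredf'
      rw [hsumAbar, ← hWeq] at hIH
      have : totalDegree f' ≤ D - 1 := hdegf'
      rw [hsum]
      omega
    · -- no roots: every section is a nonzero polynomial
      push_neg at hroot
      have hWsum := W_succ A f
      rw [← hq] at hWsum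
      -- per-section bound
      have hsec : ∀ b ∈ A 0,
          1 + m - min D m ≤ W At (Polynomial.eval (MvPolynomial.C b) q) ∧
          1 ≤ W At (Polynomial.eval (MvPolynomial.C b) q) := by
        intro b hb
        set fb := Polynomial.eval (MvPolynomial.C b) q with hfb
        have hfb0 : fb ≠ 0 := hroot b hb
        have hfbdeg : totalDegree fb ≤ D := eval_C_totalDegree q b D hcoeffdeg
        have hfbred : ∀ j : Fin n, degreeOf j fb < (At j).card := by
          intro j
          have h1 : degreeOf j fb ≤ (At j).card - 1 :=
            eval_C_degreeOf q b j _ (hcoeffdegOf j)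
          have : 1 ≤ (At j).card := Finset.card_pos.2 (hne j.succ)
          omega
        have hfbm : totalDegree fb ≤ m := by
          refine le_trans (totalDegree_le_sum_degreeOf fb) ?_
          rw [hm]
          apply Finset.sum_le_sum
          intro i _
          have := hfbred i
          omega
        have hIH := IH (n + totalDegree fb) (by omega) n At fb le_rfl
          (fun i => hne i.succ) hfb0 hfbred
        constructor
        · have hmin : totalDegree fb ≤ min D m := le_min hfbdeg hfbm
          omega
        · have : totalDegree fb ≤ m := hfbm
          omega
      -- sum up
      have hlow1 : (A 0).card * (1 + m - min D m) ≤ W A f := by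
        rw [hWsum]
        calc (A 0).card * (1 + m - min D m)
            = ∑ _b ∈ A 0, (1 + m - min D m) := by rw [Finset.sum_const, smul_eq_mul]
          _ ≤ _ := Finset.sum_le_sum fun b hb => (hsec b hb).1
      have hlow2 : (A 0).card ≤ W A f := by
        rw [hWsum]
        calc (A 0).card = ∑ _b ∈ A 0, 1 := by rw [Finset.sum_const, smul_eq_mul, mul_one]
          _ ≤ _ := Finset.sum_le_sum fun b hb => (hsec b hb).2
      rw [hsum]
      by_cases hDm : m ≤ D
      · rw [min_eq_right hDm] at hlow1
        have h1 : 1 + m - m = 1 := by omega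
        rw [h1, mul_one] at hlow1
        omega
      · push_neg at hDm
        rw [min_eq_left (le_of_lt hDm)] at hlow1
        have hfac : (A 0).card + (m - D) ≤ (A 0).card * (1 + m - min D m) := by
          rw [min_eq_left (le_of_lt hDm)]
          have h2 : 1 + m - D = 1 + (m - D) := by omega
          rw [h2, Nat.mul_add, Nat.mul_one]
          have : m - D ≤ (A 0).card * (m - D) := Nat.le_mul_of_pos_left _ (by omega)
          omega
        rw [min_eq_left (le_of_lt hDm)] at hfac
        omega

/-- Construction of codewords of prescribed weight. -/
lemma achieve {m : ℕ} (A : Fin (m+1) → Finset F) (hne : ∀ i, (A i).Nonempty)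
    (s : ℕ) (hsle : s ≤ (A (Fin.last m)).card) :
    ∃ f : MvPolynomial (Fin (m+1)) F,
      totalDegree f ≤ (∑ j : Fin m, ((A j.castSucc).card - 1)) + s ∧
      Set.ncard {x : Fin (m+1) → F | (∀ i, x i ∈ A i) ∧ eval x f ≠ 0}
        = (A (Fin.last m)).card - s := by
  obtain ⟨S, hSsub, hScard⟩ := Finset.exists_subset_card_eq hsle
  have hb : ∀ i : Fin (m+1), ∃ y, y ∈ A i := fun i => hne i
  choose b hbmem using hb
  set B : Fin (m+1) → Finset F :=
    fun i => if i = Fin.last m then A (Fin.last m) \ S else {b i} with hB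
  have hBsub : ∀ i, B i ⊆ A i := by
    intro i
    by_cases h : i = Fin.last m
    · simp only [hB, if_pos h]
      subst h
      exact Finset.sdiff_subset
    · simp only [hB, if_neg h]
      intro x hx
      rw [Finset.mem_singleton] at hx
      rw [hx]
      exact hbmem i
  set f : MvPolynomial (Fin (m+1)) F :=
    ∏ i, ∏ a ∈ A i \ B i, (X i - MvPolynomial.C a) with hf
  refine ⟨f, ?_, ?_⟩
  · -- total degree
    refine le_trans (totalDegree_finset_prod _ _) ?_
    have hfac : ∀ i, totalDegree (∏ a ∈ A i \ B i, (X i - MvPolynomial.C a))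
        ≤ (A i \ B i).card := by
      intro i
      refine le_trans (totalDegree_finset_prod _ _) ?_
      calc ∑ a ∈ A i \ B i, totalDegree (X i - MvPolynomial.C a)
          ≤ ∑ _a ∈ A i \ B i, 1 := by
            refine Finset.sum_le_sum fun a _ => ?_
            refine le_trans (totalDegree_sub _ _) ?_
            rw [totalDegree_X, totalDegree_C]
            omega
        _ = (A i \ B i).card := by rw [Finset.sum_const, smul_eq_mul, mul_one]
    refine le_trans (Finset.sum_le_sum fun i _ => hfac i) ?_
    have hcardAB : ∀ i : Fin (m+1),
        (A i \ B i).card = if i = Fin.last m then s else (A i).card - 1 := by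
      intro i
      by_cases h : i = Fin.last m
      · subst h
        simp only [hB, if_pos rfl]
        rw [sdiff_sdiff_eq_self hSsub, hScard]
        simp
      · simp only [hB, if_neg h]
        rw [Finset.sdiff_singleton_eq_erase, Finset.card_erase_of_mem (hbmem i)]
    rw [Fin.sum_univ_castSucc]
    have h1 : ∀ j : Fin m, (A j.castSucc \ B j.castSucc).card = (A j.castSucc).card - 1 := by
      intro j
      rw [hcardAB, if_neg (Fin.ne_last_of_lt (Fin.castSucc_lt_last j))]
    have h2 : (A (Fin.last m) \ B (Fin.last m)).card = s := by
      rw [hcardAB, if_pos rfl]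
    rw [h2, Finset.sum_congr rfl fun j _ => h1 j]
  · -- weight
    have hset : {x : Fin (m+1) → F | (∀ i, x i ∈ A i) ∧ eval x f ≠ 0}
        = ↑(Fintype.piFinset B) := by
      ext x
      simp only [Set.mem_setOf_eq, Finset.mem_coe, Fintype.mem_piFinset]
      constructor
      · rintro ⟨hxA, hxf⟩ i
        rw [hf, map_prod] at hxf
        have h3 := Finset.prod_ne_zero_iff.1 hxf i (Finset.mem_univ i)
        rw [map_prod] at h3
        have h4 := Finset.prod_ne_zero_iff.1 h3
        by_contra hxB
        have hmem : x i ∈ A i \ B i := Finset.mem_sdiff.2 ⟨hxA i, hxB⟩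
        have h5 := h4 (x i) hmem
        simp at h5
      · intro hxB
        have hxA : ∀ i, x i ∈ A i := fun i => hBsub i (hxB i)
        refine ⟨hxA, ?_⟩
        rw [hf, map_prod, Finset.prod_ne_zero_iff]
        intro i _
        rw [map_prod, Finset.prod_ne_zero_iff]
        intro a ha
        simp only [map_sub, eval_X, eval_C]
        rw [sub_ne_zero]
        intro hxa
        rw [Finset.mem_sdiff] at ha
        exact ha.2 (hxa ▸ hxB i)
    rw [hset, Set.ncard_coe_finset, Fintype.card_piFinset]
    rw [Fin.prod_univ_castSucc]
    have h1 : ∀ j : Fin m, (B j.castSucc).card = 1 := by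
      intro j
      simp only [hB, if_neg (Fin.ne_last_of_lt (Fin.castSucc_lt_last j))]
      exact Finset.card_singleton _
    rw [Finset.prod_congr rfl fun j _ => h1 j, Finset.prod_const_one, one_mul]
    simp only [hB, if_pos rfl]
    rw [Finset.card_sdiff_of_subset hSsub, hScard]

end CWAux

/-- Theorem 4 of the paper: if `∑_{i=1}^{n-1}(d_i-1) ≤ d < ∑_{i=1}^n (d_i-1)`
and `d = ∑_{i=1}^{n-1}(d_i-1) + ℓ` with `0 ≤ ℓ < d_n - 1`, then for each
`t ∈ {1,…,ℓ+1}`, the `t`-th Hamming weight of `C(d)` is `d_n - ℓ + (t-1)`. -/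
theorem stmt15 (F : Type*) [Field F] [Fintype F] (n : ℕ) (hn : 2 ≤ n)
    (A : Fin n → Finset F) (hcard : ∀ i, 2 ≤ (A i).card)
    (hmono : Monotone fun i => (A i).card)
    (d ℓ : ℕ)
    (hdec : d = (∑ i : Fin n, if (i : ℕ) < n - 1 then (A i).card - 1 else 0) + ℓ)
    (hℓ : ℓ < (A ⟨n - 1, by omega⟩).card - 1) :
    ∀ t : ℕ, 1 ≤ t → t ≤ ℓ + 1 →
      Nat.nth (fun w => w ∈ codeWeights F n A d) (t - 1) =
        (A ⟨n - 1, by omega⟩).card - ℓ + (t - 1) := by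
  obtain ⟨m, rfl⟩ : ∃ m, n = m + 1 := ⟨n - 1, by omega⟩
  have hne : ∀ i, (A i).Nonempty := fun i => Finset.card_pos.1 (by have := hcard i; omega)
  have hℓ' : ℓ < (A (Fin.last m)).card - 1 := hℓ
  have hc2 : 2 ≤ (A (Fin.last m)).card := hcard (Fin.last m)
  -- the sum identity
  have hSd_eq : (∑ i : Fin (m+1), if (i : ℕ) < m + 1 - 1 then (A i).card - 1 else 0)
      = ∑ j : Fin m, ((A j.castSucc).card - 1) := by
    rw [Fin.sum_univ_castSucc]
    have h1 : ((Fin.last m : Fin (m+1)) : ℕ) = m := rfl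
    rw [if_neg (by omega), add_zero]
    refine Finset.sum_congr rfl fun j _ => if_pos ?_
    have h2 : ((j.castSucc : Fin (m+1)) : ℕ) = (j : ℕ) := rfl
    omega
  have hd' : d = (∑ j : Fin m, ((A j.castSucc).card - 1)) + ℓ := by
    rw [hdec, hSd_eq]
  -- lower bound for all weights
  have hlb : ∀ w, w ∈ codeWeights F (m+1) A d → (A (Fin.last m)).card - ℓ ≤ w := by
    intro w hw
    obtain ⟨f, hfd, hwcard, hw0⟩ := hw
    have hset : {x : Fin (m+1) → F | (∀ i, x i ∈ A i) ∧ eval x f ≠ 0}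
        = ↑((Fintype.piFinset A).filter fun x => eval x f ≠ 0) := by
      ext x
      simp [Fintype.mem_piFinset]
    have hwW : w = CWAux.W A f := by
      rw [hwcard, hset, Set.ncard_coe_finset]
      rfl
    have hfil : ((Fintype.piFinset A).filter fun x => eval x f ≠ 0).Nonempty := by
      rw [← Finset.card_pos]
      rw [hwW] at hw0
      unfold CWAux.W at hw0
      exact Nat.pos_of_ne_zero hw0
    obtain ⟨x0, hx0⟩ := hfil
    rw [Finset.mem_filter, Fintype.mem_piFinset] at hx0
    obtain ⟨g, hg1, hg2, hg3⟩ := CWAux.reduceAll (m+1) A hne f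
    have hg0 : g ≠ 0 := by
      intro h
      apply hx0.2
      rw [← hg3 x0 hx0.1, h, map_zero]
    have hWgf : CWAux.W A g = CWAux.W A f := by
      unfold CWAux.W
      congr 1
      apply Finset.filter_congr
      intro x hx
      rw [Fintype.mem_piFinset] at hx
      rw [hg3 x hx]
    have hkey := CWAux.key ((m+1) + totalDegree g) (m+1) A g le_rfl hne hg0 hg1
    rw [hWgf, ← hwW] at hkey
    have hsum_split : ∑ i : Fin (m+1), ((A i).card - 1)
        = (∑ j : Fin m, ((A j.castSucc).card - 1)) + ((A (Fin.last m)).card - 1) := by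
      rw [Fin.sum_univ_castSucc]
    rw [hsum_split] at hkey
    have hgd : totalDegree g ≤ d := le_trans hg2 hfd
    clear * - hkey hd' hgd hℓ' hc2
    omega
  -- achievability
  have hach : ∀ k, k ≤ ℓ → ((A (Fin.last m)).card - ℓ + k) ∈ codeWeights F (m+1) A d := by
    intro k hk
    obtain ⟨f, hfd, hfcard⟩ := CWAux.achieve A hne (ℓ - k) (by omega)
    refine ⟨f, ?_, ?_, ?_⟩
    · refine le_trans hfd ?_
      clear hfcard
      omega
    · rw [hfcard]
      clear hfcard
      omega
    · clear hfcard
      omega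
  -- conclusion via Nat.count / Nat.nth
  intro t ht1 ht2
  have hkl : t - 1 ≤ ℓ := by omega
  have hpMk : ((A (Fin.last m)).card - ℓ + (t-1)) ∈ codeWeights F (m+1) A d :=
    hach (t-1) hkl
  have hcount : Nat.count (fun w => w ∈ codeWeights F (m+1) A d)
      ((A (Fin.last m)).card - ℓ + (t-1)) = t - 1 := by
    rw [Nat.count_eq_card_filter_range]
    have hfil : (Finset.range ((A (Fin.last m)).card - ℓ + (t-1))).filter
        (fun w => w ∈ codeWeights F (m+1) A d)
        = Finset.Ico ((A (Fin.last m)).card - ℓ) ((A (Fin.last m)).card - ℓ + (t-1)) := by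
      ext w
      rw [Finset.mem_filter, Finset.mem_range, Finset.mem_Ico]
      constructor
      · rintro ⟨h1, h2⟩
        exact ⟨hlb w h2, h1⟩
      · rintro ⟨h1, h2⟩
        refine ⟨h2, ?_⟩
        have hw : w = (A (Fin.last m)).card - ℓ + (w - ((A (Fin.last m)).card - ℓ)) := by
          omega
        rw [hw]
        exact hach (w - ((A (Fin.last m)).card - ℓ)) (by omega)
    rw [hfil, Nat.card_Ico]
    omega
  have hfin := Nat.nth_count (p := fun w => w ∈ codeWeights F (m+1) A d) hpMk
  rw [hcount] at hfin
  exact hfin
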